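/- For every solution of the delayed Hegselmann–Krause system and almost every t > 2τ, the diameter d_x is differentiable at t and satisfies (d/dt) d_x(t) ≤ 4∫_{t−τ}^{t} d_x(s−τ) ds + 4τ∫_{t−2τ}^{t} max_{l} |ẋ_l(r)| dr − N·a̲(t)·d_x(t). -/

import Mathlib

open scoped BigOperators
open MeasureTheory
open scoped RealInnerProductSpace

/-- Diameter of the agent configuration at time `t`. -/
noncomputable def hkDiam {N d : ℕ} (x : Fin N → ℝ → EuclideanSpace ℝ (Fin d)) (t : ℝ) : ℝ :=
  ⨆ i : Fin N, ⨆ j : Fin N, ‖x i t - x j t‖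

/-- Maximum of the norms of the derivatives at time `t`. -/
noncomputable def hkMaxDer {N d : ℕ} (x' : Fin N → ℝ → EuclideanSpace ℝ (Fin d)) (t : ℝ) : ℝ :=
  ⨆ i : Fin N, ‖x' i t‖

/-- Minimal communication rate `a̲(t) = min_{i ≠ j} ψ(|x_i(t-σ) - x_j(t-τ)|)/(N-1)`. -/
noncomputable def hkAMin {N d : ℕ} (ψ : ℝ → ℝ) (σ τ : ℝ)
    (x : Fin N → ℝ → EuclideanSpace ℝ (Fin d)) (t : ℝ) : ℝ :=
  ⨅ p : {p : Fin N × Fin N // p.1 ≠ p.2},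
    ψ ‖x p.val.1 (t - σ) - x p.val.2 (t - τ)‖ / (N - 1)

section aux
variable {N d : ℕ}

lemma norm_sub_le_hkDiam (x : Fin N → ℝ → EuclideanSpace ℝ (Fin d)) (i j : Fin N) (t : ℝ) :
    ‖x i t - x j t‖ ≤ hkDiam x t := by
  have h1 : ‖x i t - x j t‖ ≤ ⨆ j : Fin N, ‖x i t - x j t‖ :=
    le_ciSup (f := fun j : Fin N => ‖x i t - x j t‖)
      (Set.Finite.bddAbove (Set.finite_range _)) j
  exact h1.trans (le_ciSup (f := fun i : Fin N => ⨆ j : Fin N, ‖x i t - x j t‖)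
      (Set.Finite.bddAbove (Set.finite_range _)) i)

lemma hkDiam_nonneg (hN : 0 < N) (x : Fin N → ℝ → EuclideanSpace ℝ (Fin d)) (t : ℝ) :
    0 ≤ hkDiam x t := by
  have := norm_sub_le_hkDiam x ⟨0, hN⟩ ⟨0, hN⟩ t
  simpa using this.trans' (by positivity)

lemma exists_hkDiam_eq (hN : 0 < N) (x : Fin N → ℝ → EuclideanSpace ℝ (Fin d)) (t : ℝ) :
    ∃ i j : Fin N, hkDiam x t = ‖x i t - x j t‖ := by
  haveI : Nonempty (Fin N) := ⟨⟨0, hN⟩⟩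
  obtain ⟨p, hp⟩ := Finite.exists_max (fun p : Fin N × Fin N => ‖x p.1 t - x p.2 t‖)
  refine ⟨p.1, p.2, le_antisymm (ciSup_le fun i => ciSup_le fun j => hp (i, j))
    (norm_sub_le_hkDiam x p.1 p.2 t)⟩

lemma norm_le_hkMaxDer (x' : Fin N → ℝ → EuclideanSpace ℝ (Fin d)) (i : Fin N) (t : ℝ) :
    ‖x' i t‖ ≤ hkMaxDer x' t :=
  le_ciSup (f := fun i : Fin N => ‖x' i t‖) (Set.Finite.bddAbove (Set.finite_range _)) i

lemma hkMaxDer_nonneg (hN : 0 < N) (x' : Fin N → ℝ → EuclideanSpace ℝ (Fin d)) (t : ℝ) :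
    0 ≤ hkMaxDer x' t :=
  (norm_nonneg _).trans (norm_le_hkMaxDer x' ⟨0, hN⟩ t)

lemma hkAMin_le (ψ : ℝ → ℝ) (σ τ : ℝ) (x : Fin N → ℝ → EuclideanSpace ℝ (Fin d))
    {i j : Fin N} (hij : i ≠ j) (t : ℝ) :
    hkAMin ψ σ τ x t ≤ ψ ‖x i (t - σ) - x j (t - τ)‖ / (N - 1) :=
  ciInf_le (f := fun p : {p : Fin N × Fin N // p.1 ≠ p.2} =>
      ψ ‖x p.val.1 (t - σ) - x p.val.2 (t - τ)‖ / (N - 1))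
    (Set.Finite.bddBelow (Set.finite_range _)) ⟨(i, j), hij⟩

lemma hkAMin_nonneg (hN : 2 ≤ N) (ψ : ℝ → ℝ) (hψ : ∀ s, 0 ≤ s → 0 < ψ s)
    (σ τ : ℝ) (x : Fin N → ℝ → EuclideanSpace ℝ (Fin d)) (t : ℝ) :
    0 ≤ hkAMin ψ σ τ x t := by
  haveI : Nonempty {p : Fin N × Fin N // p.1 ≠ p.2} :=
    ⟨⟨(⟨0, by omega⟩, ⟨1, by omega⟩), by simp [Fin.ext_iff]⟩⟩
  refine le_ciInf fun p => div_nonneg (hψ _ (norm_nonneg _)).le ?_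
  have : (2:ℝ) ≤ (N:ℝ) := by exact_mod_cast hN
  linarith

end aux


section aux2
variable {N d : ℕ}

-- sup' representations
lemma hkDiam_eq_sup' (hN : 0 < N) (x : Fin N → ℝ → EuclideanSpace ℝ (Fin d)) (t : ℝ) :
    (⨆ i : Fin N, ⨆ j : Fin N, ‖x i t - x j t‖) =
      (Finset.univ : Finset (Fin N × Fin N)).sup'
        ⟨(⟨0, hN⟩, ⟨0, hN⟩), Finset.mem_univ _⟩ (fun p => ‖x p.1 t - x p.2 t‖) := by
  haveI : Nonempty (Fin N) := ⟨⟨0, hN⟩⟩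
  refine le_antisymm (ciSup_le fun i => ciSup_le fun j =>
    Finset.le_sup' (f := fun p : Fin N × Fin N => ‖x p.1 t - x p.2 t‖) (Finset.mem_univ (i, j)))
    (Finset.sup'_le _ _ fun p _ => ?_)
  have h1 : ‖x p.1 t - x p.2 t‖ ≤ ⨆ j : Fin N, ‖x p.1 t - x j t‖ :=
    le_ciSup (f := fun j : Fin N => ‖x p.1 t - x j t‖)
      (Set.Finite.bddAbove (Set.finite_range _)) p.2
  exact h1.trans (le_ciSup (f := fun i : Fin N => ⨆ j : Fin N, ‖x i t - x j t‖)
      (Set.Finite.bddAbove (Set.finite_range _)) p.1)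

lemma hkMaxDer_eq_sup' (hN : 0 < N) (x' : Fin N → ℝ → EuclideanSpace ℝ (Fin d)) (t : ℝ) :
    (⨆ i : Fin N, ‖x' i t‖) =
      (Finset.univ : Finset (Fin N)).sup' ⟨⟨0, hN⟩, Finset.mem_univ _⟩ (fun i => ‖x' i t‖) := by
  haveI : Nonempty (Fin N) := ⟨⟨0, hN⟩⟩
  refine le_antisymm (ciSup_le fun i => Finset.le_sup' (f := fun i : Fin N => ‖x' i t‖) (Finset.mem_univ i))
    (Finset.sup'_le _ _ fun i _ =>
      le_ciSup (f := fun i : Fin N => ‖x' i t‖) (Set.Finite.bddAbove (Set.finite_range _)) i)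

-- derivative of the norm
lemma hasDerivAt_norm_comp {c : ℝ → EuclideanSpace ℝ (Fin d)} {c' : EuclideanSpace ℝ (Fin d)}
    {t : ℝ} (h : HasDerivAt c c' t) (hne : c t ≠ 0) :
    HasDerivAt (fun s => ‖c s‖) (⟪c t, c'⟫ / ‖c t‖) t := by
  have h1 : HasDerivAt (fun s => ⟪c s, c s⟫) (⟪c t, c'⟫ + ⟪c', c t⟫) t := h.inner ℝ h
  have hpos : (0:ℝ) < ⟪c t, c t⟫ := by
    rw [real_inner_self_eq_norm_sq]
    exact pow_pos (norm_pos_iff.2 hne) 2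
  have h2 := (Real.hasDerivAt_sqrt hpos.ne').comp t h1
  have hsq : ∀ s, Real.sqrt ⟪c s, c s⟫ = ‖c s‖ := fun s => by
    rw [real_inner_self_eq_norm_sq, Real.sqrt_sq (norm_nonneg _)]
  have h3 : HasDerivAt (fun s => ‖c s‖)
      (1 / (2 * Real.sqrt ⟪c t, c t⟫) * (⟪c t, c'⟫ + ⟪c', c t⟫)) t := by
    refine h2.congr_of_eventuallyEq (Filter.Eventually.of_forall fun s => ?_)
    simp only [Function.comp_apply]
    exact (hsq s).symm
  convert h3 using 1
  rw [hsq t, real_inner_comm c' (c t)]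
  have hn : ‖c t‖ ≠ 0 := norm_ne_zero_iff.2 hne
  field_simp
  ring

-- derivatives of dominating functions agree at touching points
lemma deriv_eq_of_le {f g : ℝ → ℝ} {a b t : ℝ} (hle : ∀ s, f s ≤ g s) (heq : f t = g t)
    (hf : HasDerivAt f a t) (hg : HasDerivAt g b t) : b = a := by
  have hmin : IsLocalMin (fun s => g s - f s) t := by
    refine Filter.Eventually.of_forall fun s => ?_
    simp only [heq]
    linarith [hle s]
  have := hmin.hasDerivAt_eq_zero (hg.sub hf)
  linarith

end aux2


section aux3
variable {N d : ℕ}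
  {σ τ : ℝ} (hσ : 0 ≤ σ) (hστ : σ ≤ τ) (hτ : 0 < τ)
  {ψ : ℝ → ℝ} (hψcont : ContinuousOn ψ (Set.Ici 0))
  {x x' : Fin N → ℝ → EuclideanSpace ℝ (Fin d)}
  (hxc : ∀ i, ContinuousOn (x i) (Set.Ici (-τ)))
  (hder : ∀ i, ∀ t > (0:ℝ), HasDerivAt (x i) (x' i t) t)
  (hode : ∀ i, ∀ t > (0:ℝ),
    x' i t = ∑ j ∈ Finset.univ.erase i,
      (ψ ‖x i (t - σ) - x j (t - τ)‖ / (N - 1)) • (x j (t - τ) - x i (t - σ)))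

include hxc in
lemma contOn_shift (k : Fin N) {c : ℝ} (hc : 0 ≤ c) (hcτ : c ≤ τ) :
    ContinuousOn (fun t => x k (t - c)) (Set.Ioi 0) := by
  refine (hxc k).comp (continuous_id.sub continuous_const).continuousOn ?_
  intro t ht
  simp only [Set.mem_Ici]
  have : (0:ℝ) < t := ht
  linarith

include hσ hστ hψcont hxc hode in
lemma contOn_x' (l : Fin N) : ContinuousOn (x' l) (Set.Ioi 0) := by
  have hτ0 : (0:ℝ) ≤ τ := hσ.trans hστ
  refine ContinuousOn.congr (f := fun t => ∑ j ∈ Finset.univ.erase l,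
      (ψ ‖x l (t - σ) - x j (t - τ)‖ / (N - 1)) • (x j (t - τ) - x l (t - σ))) ?_
      fun t ht => hode l t ht
  refine continuousOn_finset_sum _ fun k _ => ContinuousOn.fun_smul (ContinuousOn.div_const ?_ _) ?_
  · refine hψcont.comp (((contOn_shift hxc l hσ hστ).sub
      (contOn_shift hxc k hτ0 le_rfl)).norm) fun t _ => norm_nonneg _
  · exact (contOn_shift hxc k hτ0 le_rfl).sub (contOn_shift hxc l hσ hστ)

include hσ hστ hψcont hxc hode in
lemma contOn_maxder (hN : 0 < N) : ContinuousOn (hkMaxDer x') (Set.Ioi 0) := by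
  refine ContinuousOn.congr
    (f := fun t => (Finset.univ : Finset (Fin N)).sup' ⟨⟨0, hN⟩, Finset.mem_univ _⟩
      (fun i => ‖x' i t‖)) ?_ fun t _ => hkMaxDer_eq_sup' hN x' t
  exact ContinuousOn.finset_sup'_apply _ fun i _ => (contOn_x' hσ hστ hψcont hxc hode i).norm

include hxc in
lemma contOn_diam (hN : 0 < N) : ContinuousOn (hkDiam x) (Set.Ici (-τ)) := by
  refine ContinuousOn.congr
    (f := fun t => (Finset.univ : Finset (Fin N × Fin N)).sup'
      ⟨(⟨0, hN⟩, ⟨0, hN⟩), Finset.mem_univ _⟩ (fun p => ‖x p.1 t - x p.2 t‖)) ?_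
      fun t _ => hkDiam_eq_sup' hN x t
  exact ContinuousOn.finset_sup'_apply _ fun p _ => ((hxc p.1).sub (hxc p.2)).norm

include hσ hστ hψcont hxc hode in
lemma maxder_intint (hN : 0 < N) {a b : ℝ} (ha : 0 < a) (hb : 0 < b) :
    IntervalIntegrable (hkMaxDer x') volume a b := by
  refine ((contOn_maxder hσ hστ hψcont hxc hode hN).mono ?_).intervalIntegrable
  intro r hr
  have h1 : min a b ≤ r := hr.1
  exact lt_of_lt_of_le (lt_min ha hb) h1

include hσ hστ hxc in
lemma diam_shift_intint (hN : 0 < N) {a b : ℝ} (ha : 0 ≤ a) (hb : 0 ≤ b) :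
    IntervalIntegrable (fun s => hkDiam x (s - τ)) volume a b := by
  refine ((contOn_diam hxc hN).comp
    (continuous_id.sub continuous_const).continuousOn ?_).intervalIntegrable
  intro s hs
  have h1 : min a b ≤ s := hs.1
  have h2 : (0:ℝ) ≤ s := le_trans (le_min ha hb) h1
  have hτ0 : (0:ℝ) ≤ τ := hσ.trans hστ
  simp only [Set.mem_Ici, id_eq, Pi.sub_apply]
  linarith

end aux3

section aux4
variable {N d : ℕ}
  {σ τ : ℝ} (hσ : 0 ≤ σ) (hστ : σ ≤ τ) (hτ : 0 < τ)
  {ψ : ℝ → ℝ} (hψcont : ContinuousOn ψ (Set.Ici 0))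
  {x x' : Fin N → ℝ → EuclideanSpace ℝ (Fin d)}
  (hxc : ∀ i, ContinuousOn (x i) (Set.Ici (-τ)))
  (hder : ∀ i, ∀ t > (0:ℝ), HasDerivAt (x i) (x' i t) t)
  (hode : ∀ i, ∀ t > (0:ℝ),
    x' i t = ∑ j ∈ Finset.univ.erase i,
      (ψ ‖x i (t - σ) - x j (t - τ)‖ / (N - 1)) • (x j (t - τ) - x i (t - σ)))

-- FTC bound (uses lemmas from earlier chunks)
include hσ hστ hψcont hxc hder hode in
lemma ftc_bound (hN : 0 < N) (l : Fin N) {a b : ℝ} (ha : 0 < a) (hab : a ≤ b) :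
    ‖x l b - x l a‖ ≤ ∫ r in a..b, hkMaxDer x' r := by
  have hsub : Set.uIcc a b ⊆ Set.Ioi 0 := fun r hr =>
    lt_of_lt_of_le (by simpa [min_eq_left hab] using ha : (0:ℝ) < min a b) hr.1
  have hx'c : ContinuousOn (x' l) (Set.uIcc a b) :=
    (contOn_x' hσ hστ hψcont hxc hode l).mono hsub
  have hint : IntervalIntegrable (x' l) volume a b := hx'c.intervalIntegrable
  have heq : ∫ r in a..b, x' l r = x l b - x l a :=
    intervalIntegral.integral_eq_sub_of_hasDerivAt (fun r hr => hder l r (hsub hr)) hint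
  rw [← heq]
  calc ‖∫ r in a..b, x' l r‖ ≤ ∫ r in a..b, ‖x' l r‖ :=
        intervalIntegral.norm_integral_le_integral_norm hab
    _ ≤ ∫ r in a..b, hkMaxDer x' r := by
        apply intervalIntegral.integral_mono_on hab hx'c.norm.intervalIntegrable
          (maxder_intint hσ hστ hψcont hxc hode hN ha (lt_of_lt_of_le ha hab))
        exact fun r _ => norm_le_hkMaxDer x' l r

include hσ hστ hτ hψcont hxc hder hode in
lemma ae_diff (hN : 0 < N) :
    ∀ᵐ t ∂(volume : Measure ℝ), t ∈ Set.Ioi (2*τ) → DifferentiableAt ℝ (hkDiam x) t := by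
  haveI : Nonempty (Fin N) := ⟨⟨0, hN⟩⟩
  have key : ∀ n : ℕ, ∀ᵐ t ∂(volume : Measure ℝ),
      t ∈ Set.Ioo (2*τ) (2*τ + n) → DifferentiableAt ℝ (hkDiam x) t := by
    intro n
    set A := Set.Icc τ (2*τ + n) with hA
    have hAsub : A ⊆ Set.Ioi 0 := fun r hr => lt_of_lt_of_le hτ hr.1
    obtain ⟨C, hC⟩ := isCompact_Icc.exists_bound_of_continuousOn
      ((contOn_maxder hσ hστ hψcont hxc hode hN).mono hAsub)
    have hC' : ∀ r ∈ A, hkMaxDer x' r ≤ C := fun r hr =>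
      (le_abs_self _).trans (by simpa [Real.norm_eq_abs] using hC r hr)
    -- one-sided Lipschitz estimate
    have hkey : ∀ r ∈ A, ∀ s ∈ A, r ≤ s → hkDiam x s ≤ hkDiam x r + 2*C*(s-r) := by
      intro r hr s hs hrs
      obtain ⟨i, j, hij⟩ := exists_hkDiam_eq hN x s
      have hsubA : Set.Icc r s ⊆ A := Set.Icc_subset_Icc hr.1 hs.2
      have hstep : ∀ l : Fin N, ‖x l s - x l r‖ ≤ C * (s - r) := by
        intro l
        calc ‖x l s - x l r‖ ≤ ∫ u in r..s, hkMaxDer x' u :=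
              ftc_bound hσ hστ hψcont hxc hder hode hN l (lt_of_lt_of_le hτ hr.1) hrs
          _ ≤ ∫ _u in r..s, C := by
              apply intervalIntegral.integral_mono_on hrs
                (maxder_intint hσ hστ hψcont hxc hode hN (lt_of_lt_of_le hτ hr.1)
                  (lt_of_lt_of_le hτ hs.1)) intervalIntegrable_const
              exact fun u hu => hC' u (hsubA hu)
          _ = C * (s - r) := by rw [intervalIntegral.integral_const, smul_eq_mul, mul_comm]
      have h1 : x i s - x j s = (x i r - x j r) + ((x i s - x i r) - (x j s - x j r)) := by abel
      calc hkDiam x s = ‖x i s - x j s‖ := hij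
        _ ≤ ‖x i r - x j r‖ + (‖x i s - x i r‖ + ‖x j s - x j r‖) := by
            rw [h1]
            exact (norm_add_le _ _).trans (by gcongr; exact norm_sub_le _ _)
        _ ≤ hkDiam x r + (C*(s-r) + C*(s-r)) := by
            gcongr
            exacts [norm_sub_le_hkDiam x i j r, hstep i, hstep j]
        _ = hkDiam x r + 2*C*(s-r) := by ring
    have hkey2 : ∀ r ∈ A, ∀ s ∈ A, r ≤ s → hkDiam x r ≤ hkDiam x s + 2*C*(s-r) := by
      intro r hr s hs hrs
      obtain ⟨i, j, hij⟩ := exists_hkDiam_eq hN x r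
      have hsubA : Set.Icc r s ⊆ A := Set.Icc_subset_Icc hr.1 hs.2
      have hstep : ∀ l : Fin N, ‖x l s - x l r‖ ≤ C * (s - r) := by
        intro l
        calc ‖x l s - x l r‖ ≤ ∫ u in r..s, hkMaxDer x' u :=
              ftc_bound hσ hστ hψcont hxc hder hode hN l (lt_of_lt_of_le hτ hr.1) hrs
          _ ≤ ∫ _u in r..s, C := by
              apply intervalIntegral.integral_mono_on hrs
                (maxder_intint hσ hστ hψcont hxc hode hN (lt_of_lt_of_le hτ hr.1)
                  (lt_of_lt_of_le hτ hs.1)) intervalIntegrable_const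
              exact fun u hu => hC' u (hsubA hu)
          _ = C * (s - r) := by rw [intervalIntegral.integral_const, smul_eq_mul, mul_comm]
      have h1 : x i r - x j r = (x i s - x j s) + ((x i r - x i s) - (x j r - x j s)) := by abel
      calc hkDiam x r = ‖x i r - x j r‖ := hij
        _ ≤ ‖x i s - x j s‖ + (‖x i r - x i s‖ + ‖x j r - x j s‖) := by
            rw [h1]
            exact (norm_add_le _ _).trans (by gcongr; exact norm_sub_le _ _)
        _ ≤ hkDiam x s + (C*(s-r) + C*(s-r)) := by
            gcongr
            · exact norm_sub_le_hkDiam x i j s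
            · rw [norm_sub_rev]; exact hstep i
            · rw [norm_sub_rev]; exact hstep j
        _ = hkDiam x s + 2*C*(s-r) := by ring
    have hlip : LipschitzOnWith (Real.toNNReal (2*C)) (hkDiam x) A := by
      apply LipschitzOnWith.of_dist_le_mul
      intro p hp q hq
      have habs : ∀ p ∈ A, ∀ q ∈ A, p ≤ q → dist (hkDiam x q) (hkDiam x p) ≤ 2*C*(q-p) := by
        intro p hp q hq hpq
        rw [Real.dist_eq, abs_le]
        constructor <;> nlinarith [hkey p hp q hq hpq, hkey2 p hp q hq hpq]
      rcases le_total p q with h | h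
      · have h2 : dist p q = q - p := by
          rw [Real.dist_eq, abs_of_nonpos (by linarith)]; ring
        rw [dist_comm (hkDiam x p)]
        calc dist (hkDiam x q) (hkDiam x p) ≤ 2*C*(q-p) := habs p hp q hq h
          _ = 2*C*dist p q := by rw [h2]
          _ ≤ _ := mul_le_mul_of_nonneg_right (Real.le_coe_toNNReal _) dist_nonneg
      · have h2 : dist p q = p - q := by
          rw [Real.dist_eq, abs_of_nonneg (by linarith)]
        calc dist (hkDiam x p) (hkDiam x q) ≤ 2*C*(p-q) := habs q hq p hp h
          _ = 2*C*dist p q := by rw [h2]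
          _ ≤ _ := mul_le_mul_of_nonneg_right (Real.le_coe_toNNReal _) dist_nonneg
    obtain ⟨g, hg_lip, hg_eq⟩ := hlip.extend_real
    filter_upwards [hg_lip.ae_differentiableAt_of_real] with t hdt ht
    have hmem : Set.Ioo τ (2*τ + n) ∈ nhds t :=
      Ioo_mem_nhds (by linarith [ht.1]) ht.2
    have heq : hkDiam x =ᶠ[nhds t] g :=
      Filter.eventuallyEq_of_mem hmem fun s hs => hg_eq ⟨hs.1.le, hs.2.le⟩
    exact heq.differentiableAt_iff.2 hdt
  have key' := (MeasureTheory.ae_all_iff (μ := (volume : Measure ℝ)) (p := fun (t : ℝ) (n : ℕ) =>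
    t ∈ Set.Ioo (2*τ) (2*τ + (n:ℝ)) → DifferentiableAt ℝ (hkDiam x) t)).2 key
  filter_upwards [key'] with t h ht
  obtain ⟨n, hn⟩ := exists_nat_gt (t - 2*τ)
  exact h n ⟨ht, by linarith⟩

end aux4

section aux5
variable {N d : ℕ}
  {σ τ : ℝ} (hσ : 0 ≤ σ) (hστ : σ ≤ τ) (hτ : 0 < τ)
  {ψ : ℝ → ℝ} (hψpos : ∀ s, 0 ≤ s → 0 < ψ s) (hψcont : ContinuousOn ψ (Set.Ici 0))
  (hψbdd : ∀ s, 0 ≤ s → ψ s ≤ 1)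
  {x x' : Fin N → ℝ → EuclideanSpace ℝ (Fin d)}
  (hxc : ∀ i, ContinuousOn (x i) (Set.Ici (-τ)))
  (hder : ∀ i, ∀ t > (0:ℝ), HasDerivAt (x i) (x' i t) t)
  (hode : ∀ i, ∀ t > (0:ℝ),
    x' i t = ∑ j ∈ Finset.univ.erase i,
      (ψ ‖x i (t - σ) - x j (t - τ)‖ / (N - 1)) • (x j (t - τ) - x i (t - σ)))

-- The maxder pointwise bound and the R ≤ I1 + τ Q chain.
include hσ hστ hτ hψpos hψcont hψbdd hxc hder hode in
lemma chain_bound (hN : 2 ≤ N) {t : ℝ} (ht : 2*τ < t) :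
    (∫ r in (t-τ)..t, hkMaxDer x' r) ≤ (∫ s in (t - τ)..t, hkDiam x (s - τ))
      + τ * (∫ r in (t - 2*τ)..t, hkMaxDer x' r) := by
  have hN0 : 0 < N := by omega
  haveI : Nonempty (Fin N) := ⟨⟨0, hN0⟩⟩
  have hN1 : (1:ℝ) ≤ (N:ℝ) - 1 := by
    have : (2:ℝ) ≤ (N:ℝ) := by exact_mod_cast hN
    linarith
  set Q := ∫ r in (t - 2*τ)..t, hkMaxDer x' r with hQdef
  have hQint : IntervalIntegrable (hkMaxDer x') volume (t - 2*τ) t :=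
    maxder_intint hσ hστ hψcont hxc hode hN0 (by linarith) (by linarith)
  have hQ0 : 0 ≤ Q := intervalIntegral.integral_nonneg (by linarith)
    (fun r _ => hkMaxDer_nonneg hN0 x' r)
  have hbound : ∀ r ∈ Set.Icc (t-τ) t, hkMaxDer x' r ≤ hkDiam x (r-τ) + Q := by
    intro r hr
    have hr0 : (0:ℝ) < r := by have := hr.1; linarith
    have hrτ : τ < r := by have := hr.1; linarith
    refine ciSup_le fun l => ?_
    rw [hode l r hr0]
    have hterm : ∀ k : Fin N, ‖x k (r - τ) - x l (r - σ)‖ ≤ hkDiam x (r-τ) + Q := by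
      intro k
      have h1 : x k (r - τ) - x l (r - σ) =
          (x k (r - τ) - x l (r - τ)) + (x l (r - τ) - x l (r - σ)) := by abel
      have h2 : ‖x l (r - τ) - x l (r - σ)‖ ≤ Q := by
        rw [norm_sub_rev]
        calc ‖x l (r - σ) - x l (r - τ)‖ ≤ ∫ u in (r-τ)..(r-σ), hkMaxDer x' u :=
              ftc_bound hσ hστ hψcont hxc hder hode hN0 l (by linarith) (by linarith)
          _ ≤ Q := by
              refine intervalIntegral.integral_mono_interval (by linarith [hr.1])
                (by linarith) (by linarith [hr.2])
                (Filter.Eventually.of_forall fun u => hkMaxDer_nonneg hN0 x' u) hQint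
      calc ‖x k (r - τ) - x l (r - σ)‖
          ≤ ‖x k (r - τ) - x l (r - τ)‖ + ‖x l (r - τ) - x l (r - σ)‖ := by
            rw [h1]; exact norm_add_le _ _
        _ ≤ hkDiam x (r-τ) + Q := add_le_add (norm_sub_le_hkDiam x k l (r-τ)) h2
    have hBnn : 0 ≤ hkDiam x (r-τ) + Q := add_nonneg (hkDiam_nonneg hN0 x _) hQ0
    calc ‖∑ k ∈ Finset.univ.erase l,
          (ψ ‖x l (r - σ) - x k (r - τ)‖ / (↑N - 1)) • (x k (r - τ) - x l (r - σ))‖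
        ≤ ∑ k ∈ Finset.univ.erase l,
          ‖(ψ ‖x l (r - σ) - x k (r - τ)‖ / (↑N - 1)) • (x k (r - τ) - x l (r - σ))‖ :=
          norm_sum_le _ _
      _ ≤ ∑ _k ∈ Finset.univ.erase l, (1/((N:ℝ) - 1)) * (hkDiam x (r-τ) + Q) := by
          refine Finset.sum_le_sum fun k _ => ?_
          rw [norm_smul, Real.norm_eq_abs,
            abs_of_nonneg (div_nonneg (hψpos _ (norm_nonneg _)).le (by linarith))]
          refine mul_le_mul ?_ (hterm k) (norm_nonneg _) (by positivity)
          exact div_le_div₀ (by norm_num) (hψbdd _ (norm_nonneg _)) (by linarith) le_rfl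
      _ = hkDiam x (r-τ) + Q := by
          rw [Finset.sum_const, Finset.card_erase_of_mem (Finset.mem_univ l),
            Finset.card_univ, Fintype.card_fin, nsmul_eq_mul]
          rw [Nat.cast_sub (by omega : 1 ≤ N), Nat.cast_one]
          field_simp
  calc (∫ r in (t-τ)..t, hkMaxDer x' r)
      ≤ ∫ s in (t-τ)..t, (hkDiam x (s - τ) + Q) := by
        refine intervalIntegral.integral_mono_on (by linarith)
          (maxder_intint hσ hστ hψcont hxc hode hN0 (by linarith) (by linarith))
          (((diam_shift_intint hσ hστ hxc hN0 (by linarith) (by linarith)).add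
            intervalIntegrable_const)) hbound
    _ = (∫ s in (t - τ)..t, hkDiam x (s - τ)) + τ * Q := by
        rw [intervalIntegral.integral_add
          (diam_shift_intint hσ hστ hxc hN0 (by linarith) (by linarith))
          intervalIntegrable_const, intervalIntegral.integral_const, smul_eq_mul]
        rw [show t - (t - τ) = τ by ring]

include hσ hστ hτ hψpos hψcont hψbdd hxc hder hode in
lemma main_est (hN : 2 ≤ N) {t D : ℝ} (ht : 2*τ < t)
    (hD : HasDerivAt (hkDiam x) D t) :
    D ≤ 4 * (∫ s in (t - τ)..t, hkDiam x (s - τ))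
      + 4 * τ * (∫ r in (t - 2 * τ)..t, hkMaxDer x' r)
      - N * hkAMin ψ σ τ x t * hkDiam x t := by
  have hN0 : 0 < N := by omega
  haveI : Nonempty (Fin N) := ⟨⟨0, hN0⟩⟩
  have hN1 : (1:ℝ) ≤ (N:ℝ) - 1 := by
    have h2 : (2:ℝ) ≤ (N:ℝ) := by exact_mod_cast hN
    linarith
  have ht0 : (0:ℝ) < t := by linarith
  set amin := hkAMin ψ σ τ x t with hamin
  have hamin0 : 0 ≤ amin := hkAMin_nonneg hN ψ hψpos σ τ x t
  set I1 := ∫ s in (t - τ)..t, hkDiam x (s - τ) with hI1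
  set Q := ∫ r in (t - 2*τ)..t, hkMaxDer x' r with hQ
  set R := ∫ r in (t - τ)..t, hkMaxDer x' r with hRdef
  have hI10 : 0 ≤ I1 := intervalIntegral.integral_nonneg (by linarith)
    (fun s _ => hkDiam_nonneg hN0 x _)
  have hQ0 : 0 ≤ Q := intervalIntegral.integral_nonneg (by linarith)
    (fun r _ => hkMaxDer_nonneg hN0 x' r)
  have hR0 : 0 ≤ R := intervalIntegral.integral_nonneg (by linarith)
    (fun r _ => hkMaxDer_nonneg hN0 x' r)
  have hRQ : R ≤ I1 + τ * Q :=
    chain_bound hσ hστ hτ hψpos hψcont hψbdd hxc hder hode hN ht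
  obtain ⟨i, j, hij⟩ := exists_hkDiam_eq hN0 x t
  rcases eq_or_lt_of_le (hkDiam_nonneg hN0 x t) with hM | hM
  · have hmin : IsLocalMin (hkDiam x) t := Filter.Eventually.of_forall fun s => by
      rw [← hM]; exact hkDiam_nonneg hN0 x s
    have hD0 : D = 0 := hmin.hasDerivAt_eq_zero hD
    rw [hD0, ← hM]
    nlinarith [hτ.le]
  · set M := hkDiam x t with hMdef
    have hMne : ‖x i t - x j t‖ ≠ 0 := by rw [← hij]; exact ne_of_gt hM
    have hne : x i t - x j t ≠ 0 := fun h => hMne (by rw [h, norm_zero])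
    have hc' : HasDerivAt (fun s => x i s - x j s) (x' i t - x' j t) t :=
      (hder i t ht0).sub (hder j t ht0)
    have hf : HasDerivAt (fun s => ‖x i s - x j s‖)
        (⟪x i t - x j t, x' i t - x' j t⟫ / ‖x i t - x j t‖) t :=
      hasDerivAt_norm_comp hc' hne
    have hDval : D = ⟪x i t - x j t, x' i t - x' j t⟫ / ‖x i t - x j t‖ :=
      deriv_eq_of_le (fun s => norm_sub_le_hkDiam x i j s) hij.symm hf hD
    set u : EuclideanSpace ℝ (Fin d) := ‖x i t - x j t‖⁻¹ • (x i t - x j t) with hu_def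
    have hu : ‖u‖ = 1 := by
      rw [hu_def]
      simpa using norm_smul_inv_norm (𝕜 := ℝ) hne
    set P : EuclideanSpace ℝ (Fin d) → ℝ := fun v => ⟪u, v⟫ with hP
    have hPsub : ∀ v w, P (v - w) = P v - P w := fun v w => inner_sub_right u v w
    have hPle : ∀ v, P v ≤ ‖v‖ := fun v => by
      calc P v ≤ ‖u‖ * ‖v‖ := real_inner_le_norm u v
        _ = ‖v‖ := by rw [hu, one_mul]
    have hPneg : ∀ v, -P v ≤ ‖v‖ := fun v => by
      have h1 := hPle (-v)
      have h2 : P (-v) = -P v := by rw [hP]; exact inner_neg_right u v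
      rw [h2, norm_neg] at h1
      exact h1
    have hMne' : M ≠ 0 := ne_of_gt hM
    have hPM : P (x i t - x j t) = M := by
      have h1 : P (x i t - x j t)
          = ‖x i t - x j t‖⁻¹ * (‖x i t - x j t‖ * ‖x i t - x j t‖) := by
        simp only [hP, hu_def]
        rw [real_inner_smul_left, real_inner_self_eq_norm_mul_norm]
      rw [h1, ← hij]
      field_simp
    have hMP : P (x i t) - P (x j t) = M := by rw [← hPsub]; exact hPM
    have hDP : D = P (x' i t) - P (x' j t) := by
      rw [hDval, ← hPsub, hP]
      simp only [hu_def]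
      rw [real_inner_smul_left, div_eq_inv_mul]
    have hK1 : ∀ k, P (x k t) - P (x i t) ≤ 0 := by
      intro k
      have h1 : P (x k t) - P (x j t) ≤ M := by
        rw [← hPsub]
        exact (hPle _).trans (norm_sub_le_hkDiam x k j t)
      linarith [hMP]
    have hK2 : ∀ k, 0 ≤ P (x k t) - P (x j t) := by
      intro k
      have h1 : P (x i t) - P (x k t) ≤ M := by
        rw [← hPsub]
        exact (hPle _).trans (norm_sub_le_hkDiam x i k t)
      linarith [hMP]
    -- error bounds
    have herr : ∀ l k : Fin N, ‖(x k (t-τ) - x l (t-σ)) - (x k t - x l t)‖ ≤ 2*R := by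
      intro l k
      have h1 : (x k (t-τ) - x l (t-σ)) - (x k t - x l t)
          = (x k (t-τ) - x k t) + (x l t - x l (t-σ)) := by abel
      have h2 : ‖x k (t-τ) - x k t‖ ≤ R := by
        rw [norm_sub_rev]
        exact ftc_bound hσ hστ hψcont hxc hder hode hN0 k (a := t - τ) (b := t)
          (by linarith) (by linarith)
      have h3 : ‖x l t - x l (t-σ)‖ ≤ R := by
        calc ‖x l t - x l (t-σ)‖ ≤ ∫ u in (t-σ)..t, hkMaxDer x' u :=
              ftc_bound hσ hστ hψcont hxc hder hode hN0 l (a := t - σ) (b := t)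
                (by linarith) (by linarith)
          _ ≤ R := intervalIntegral.integral_mono_interval (by linarith) (by linarith)
              le_rfl (Filter.Eventually.of_forall fun r => hkMaxDer_nonneg hN0 x' r)
              (maxder_intint hσ hστ hψcont hxc hode hN0 (by linarith) (by linarith))
      calc ‖(x k (t-τ) - x l (t-σ)) - (x k t - x l t)‖
          ≤ ‖x k (t-τ) - x k t‖ + ‖x l t - x l (t-σ)‖ := by rw [h1]; exact norm_add_le _ _
        _ ≤ 2*R := by linarith
    -- coefficients
    set a : Fin N → Fin N → ℝ := fun l k => ψ ‖x l (t - σ) - x k (t - τ)‖ / ((N:ℝ) - 1)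
      with ha
    have ha0 : ∀ l k, 0 ≤ a l k := fun l k =>
      div_nonneg (hψpos _ (norm_nonneg _)).le (by linarith)
    have haup : ∀ l k, a l k ≤ 1/((N:ℝ)-1) := fun l k =>
      div_le_div₀ (by norm_num) (hψbdd _ (norm_nonneg _)) (by linarith) le_rfl
    have halow : ∀ l k, l ≠ k → amin ≤ a l k := fun l k h => hkAMin_le ψ σ τ x h t
    have hcard : ((Finset.univ : Finset (Fin N)).erase i).card = N - 1 := by
      rw [Finset.card_erase_of_mem (Finset.mem_univ i), Finset.card_univ, Fintype.card_fin]
    have hPx' : ∀ l, P (x' l t)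
        = ∑ k ∈ Finset.univ.erase l, a l k * P (x k (t-τ) - x l (t-σ)) := by
      intro l
      rw [hode l t ht0]
      simp only [hP]
      rw [inner_sum]
      exact Finset.sum_congr rfl fun k _ => real_inner_smul_right u _ _
    have hsplit : ∀ l k : Fin N, P (x k (t-τ) - x l (t-σ))
        = (P (x k t) - P (x l t)) + P ((x k (t-τ) - x l (t-σ)) - (x k t - x l t)) := by
      intro l k
      have h1 := hPsub (x k (t-τ) - x l (t-σ)) (x k t - x l t)
      have h2 := hPsub (x k t) (x l t)
      linarith
    have hcfin : ((N:ℝ) - 1) * ((1/((N:ℝ)-1)) * (2*R)) = 2*R := by field_simp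
    have hcast : (((N - 1 : ℕ)):ℝ) = (N:ℝ) - 1 := by
      rw [Nat.cast_sub (by omega : 1 ≤ N), Nat.cast_one]
    have hPi : P (x' i t)
        ≤ (∑ k ∈ Finset.univ.erase i, amin * (P (x k t) - P (x i t))) + 2*R := by
      rw [hPx' i]
      calc ∑ k ∈ Finset.univ.erase i, a i k * P (x k (t-τ) - x i (t-σ))
          ≤ ∑ k ∈ Finset.univ.erase i,
            (amin * (P (x k t) - P (x i t)) + (1/((N:ℝ)-1)) * (2*R)) := by
            refine Finset.sum_le_sum fun k hk => ?_
            have hk' : i ≠ k := (Finset.ne_of_mem_erase hk).symm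
            rw [hsplit i k, mul_add]
            refine add_le_add ?_ ?_
            · exact mul_le_mul_of_nonpos_right (halow i k hk') (hK1 k)
            · calc a i k * P ((x k (t-τ) - x i (t-σ)) - (x k t - x i t))
                  ≤ a i k * (2*R) :=
                    mul_le_mul_of_nonneg_left ((hPle _).trans (herr i k)) (ha0 i k)
                _ ≤ (1/((N:ℝ)-1)) * (2*R) :=
                    mul_le_mul_of_nonneg_right (haup i k) (by linarith)
        _ = (∑ k ∈ Finset.univ.erase i, amin * (P (x k t) - P (x i t))) + 2*R := by
            rw [Finset.sum_add_distrib, Finset.sum_const, hcard, nsmul_eq_mul, hcast, hcfin]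
    have hPj : -P (x' j t)
        ≤ -(∑ k ∈ Finset.univ.erase j, amin * (P (x k t) - P (x j t))) + 2*R := by
      rw [hPx' j]
      have hstep : ∀ k ∈ Finset.univ.erase j,
          -(a j k * P (x k (t-τ) - x j (t-σ)))
          ≤ -(amin * (P (x k t) - P (x j t))) + (1/((N:ℝ)-1)) * (2*R) := by
        intro k hk
        have hk' : j ≠ k := (Finset.ne_of_mem_erase hk).symm
        have h1 : amin * (P (x k t) - P (x j t)) ≤ a j k * (P (x k t) - P (x j t)) :=
          mul_le_mul_of_nonneg_right (halow j k hk') (hK2 k)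
        have h2 : a j k * (-P ((x k (t-τ) - x j (t-σ)) - (x k t - x j t))) ≤ a j k * (2*R) :=
          mul_le_mul_of_nonneg_left ((hPneg _).trans (herr j k)) (ha0 j k)
        have h3 : a j k * (2*R) ≤ (1/((N:ℝ)-1)) * (2*R) :=
          mul_le_mul_of_nonneg_right (haup j k) (by linarith)
        rw [mul_neg] at h2
        have h5 : a j k * P (x k (t-τ) - x j (t-σ))
            = a j k * (P (x k t) - P (x j t))
              + a j k * P ((x k (t-τ) - x j (t-σ)) - (x k t - x j t)) := by
          rw [hsplit j k, mul_add]
        linarith [h1, h2, h3, h5]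
      calc -∑ k ∈ Finset.univ.erase j, a j k * P (x k (t-τ) - x j (t-σ))
          = ∑ k ∈ Finset.univ.erase j, -(a j k * P (x k (t-τ) - x j (t-σ))) := by
            rw [← Finset.sum_neg_distrib]
        _ ≤ ∑ k ∈ Finset.univ.erase j,
            (-(amin * (P (x k t) - P (x j t))) + (1/((N:ℝ)-1)) * (2*R)) :=
            Finset.sum_le_sum hstep
        _ = -(∑ k ∈ Finset.univ.erase j, amin * (P (x k t) - P (x j t))) + 2*R := by
            rw [Finset.sum_add_distrib, Finset.sum_const,
              Finset.card_erase_of_mem (Finset.mem_univ j), Finset.card_univ,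
              Fintype.card_fin, nsmul_eq_mul, hcast, hcfin, ← Finset.sum_neg_distrib]
    have hsum : (∑ k ∈ Finset.univ.erase i, amin * (P (x k t) - P (x i t)))
        - (∑ k ∈ Finset.univ.erase j, amin * (P (x k t) - P (x j t)))
        = -((N:ℝ) * amin * M) := by
      rw [Finset.sum_erase _ (by simp), Finset.sum_erase _ (by simp)]
      rw [← Finset.sum_sub_distrib]
      have hterm : ∀ k : Fin N, (amin * (P (x k t) - P (x i t))
          - amin * (P (x k t) - P (x j t))) = -(amin * M) := by
        intro k
        linear_combination (-amin) * hMP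
      rw [Finset.sum_congr rfl (fun k _ => hterm k), Finset.sum_const,
        Finset.card_univ, Fintype.card_fin, nsmul_eq_mul]
      ring
    have hfinal : D ≤ -((N:ℝ) * amin * M) + 4*R := by
      rw [hDP]
      linarith [hPi, hPj, hsum]
    linarith [hfinal, hRQ]

end aux5

theorem stmt_4
    (N d : ℕ) (hN : 2 ≤ N) (hd : 1 ≤ d)
    (σ τ : ℝ) (hσ : 0 ≤ σ) (hστ : σ ≤ τ) (hτ : 0 < τ)
    (ψ : ℝ → ℝ)
    (hψpos : ∀ s, 0 ≤ s → 0 < ψ s)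
    (hψcont : ContinuousOn ψ (Set.Ici 0))
    (hψmono : ∀ s t, 0 ≤ s → s ≤ t → ψ t ≤ ψ s)
    (hψbdd : ∀ s, 0 ≤ s → ψ s ≤ 1)
    (x x' : Fin N → ℝ → EuclideanSpace ℝ (Fin d))
    (hxc : ∀ i, ContinuousOn (x i) (Set.Ici (-τ)))
    (hder : ∀ i, ∀ t > (0:ℝ), HasDerivAt (x i) (x' i t) t)
    (hode : ∀ i, ∀ t > (0:ℝ),
      x' i t = ∑ j ∈ Finset.univ.erase i,
        (ψ ‖x i (t - σ) - x j (t - τ)‖ / (N - 1)) • (x j (t - τ) - x i (t - σ))) :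
    ∀ᵐ t ∂(volume : Measure ℝ), t ∈ Set.Ioi (2 * τ) →
      ∃ D : ℝ, HasDerivAt (hkDiam x) D t ∧
        D ≤ 4 * (∫ s in (t - τ)..t, hkDiam x (s - τ))
          + 4 * τ * (∫ r in (t - 2 * τ)..t, hkMaxDer x' r)
          - N * hkAMin ψ σ τ x t * hkDiam x t := by
  have hN0 : 0 < N := by omega
  filter_upwards [ae_diff hσ hστ hτ hψcont hxc hder hode hN0] with t hdiff ht
  have ht' : 2 * τ < t := ht
  have hD := (hdiff ht).hasDerivAt
  exact ⟨deriv (hkDiam x) t, hD,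
    main_est hσ hστ hτ hψpos hψcont hψbdd hxc hder hode hN ht' hD⟩
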